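/- arXiv:2001.04823 — 4 statements merged into one kernel-verified Lean document; each statement's English description precedes it below -/
import Mathlib

section
/- Let A be a commutative ring and let e, f ∈ A be idempotent elements. If every purely-prime ideal of A contains e if and only if it contains f, then e = f. (This is the injectivity part of the Grothendieck-type theorem: the map e ↦ U_e = {P purely-prime : e ∉ P} from idempotents of A to subsets of the pure spectrum is injective.) -/
variable {A : Type*} [CommRing A]

/-- An ideal `I` is pure if for every `f ∈ I` there exists `g ∈ I` with `f * (1 - g) = 0`. -/
def Ideal.IsPure (I : Ideal A) : Prop :=
  ∀ f ∈ I, ∃ g ∈ I, f * (1 - g) = 0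

/-- The pure part `ν(I)`: the largest pure ideal contained in `I`
(the sum of all pure ideals contained in `I`). -/
def Ideal.purePart (I : Ideal A) : Ideal A :=
  sSup {J : Ideal A | J.IsPure ∧ J ≤ I}

/-- A purely-prime ideal: a proper pure ideal `P` such that whenever `I`, `J` are pure ideals
with `I * J ≤ P`, either `I ≤ P` or `J ≤ P`. -/
def Ideal.IsPurelyPrime (P : Ideal A) : Prop :=
  P.IsPure ∧ P ≠ ⊤ ∧
    ∀ I J : Ideal A, I.IsPure → J.IsPure → I * J ≤ P → I ≤ P ∨ J ≤ P

/-- A purely-maximal ideal: a maximal element of the set of proper pure ideals. -/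
def Ideal.IsPurelyMaximal (P : Ideal A) : Prop :=
  P.IsPure ∧ P ≠ ⊤ ∧
    ∀ Q : Ideal A, Q.IsPure → Q ≠ ⊤ → P ≤ Q → P = Q

/-- A Gelfand ring: every prime ideal is contained in a unique maximal ideal. -/
def IsGelfandRing (A : Type*) [CommRing A] : Prop :=
  ∀ p : Ideal A, p.IsPrime → ∃! m : Ideal A, m.IsMaximal ∧ p ≤ m

/-- An mp-ring: every prime ideal contains a unique minimal prime ideal. -/
def IsMpRing (A : Type*) [CommRing A] : Prop :=
  ∀ p : Ideal A, p.IsPrime → ∃! q : Ideal A, q ∈ minimalPrimes A ∧ q ≤ p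

/-- The kernel of the canonical map `A → A_p` to the localization at a prime `p`. -/
def Ideal.kerPi (p : Ideal A) (hp : p.IsPrime) : Ideal A :=
  letI := hp
  RingHom.ker (algebraMap A (Localization.AtPrime p))

/-- The unit part `u(I) = {f : f = f * g for some g ∈ I}`. -/
def Ideal.unitPart (I : Ideal A) : Ideal A where
  carrier := {f | ∃ g ∈ I, f = f * g}
  zero_mem' := ⟨0, I.zero_mem, by ring⟩
  add_mem' := by
    rintro a b ⟨g, hg, ha⟩ ⟨h, hh, hb⟩
    exact ⟨g + h - g * h, I.sub_mem (I.add_mem hg hh) (I.mul_mem_right h hg),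
      by linear_combination (1 - h) * ha + (1 - g) * hb⟩
  smul_mem' := by
    rintro c a ⟨g, hg, ha⟩
    exact ⟨g, hg, by rw [smul_eq_mul]; linear_combination c * ha⟩

lemma isPure_sup {I J : Ideal A} (hI : I.IsPure) (hJ : J.IsPure) : (I ⊔ J).IsPure := by
  intro x hx
  rcases Submodule.mem_sup.mp hx with ⟨a, ha, b, hb, rfl⟩
  obtain ⟨g, hg, hag⟩ := hI a ha
  obtain ⟨k, hk, hbk⟩ := hJ b hb
  refine ⟨g + k - g * k, ?_, ?_⟩
  · exact Submodule.sub_mem _ (Submodule.add_mem _ (Ideal.mem_sup_left hg) (Ideal.mem_sup_right hk))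
      (Ideal.mem_sup_left (I.mul_mem_right k hg))
  · linear_combination (1 - k) * hag + (1 - g) * hbk

lemma exists_purelyPrime {B : Ideal A} (hB : B.IsPure) (hBne : B ≠ ⊤) :
    ∃ P : Ideal A, P.IsPurelyPrime ∧ B ≤ P := by
  have hchainub : ∀ c ⊆ {Q : Ideal A | Q.IsPure ∧ Q ≠ ⊤}, IsChain (· ≤ ·) c →
      ∀ y ∈ c, ∃ ub ∈ {Q : Ideal A | Q.IsPure ∧ Q ≠ ⊤}, ∀ z ∈ c, z ≤ ub := by
    intro c hc hchain y hy
    refine ⟨sSup c, ⟨?_, ?_⟩, fun z hz => le_sSup hz⟩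
    · intro x hx
      have hdir : DirectedOn (· ≤ ·) c := hchain.directedOn
      rcases (Submodule.mem_sSup_of_directed ⟨y, hy⟩ hdir).mp hx with ⟨I, hIc, hxI⟩
      obtain ⟨g, hg, hxg⟩ := (hc hIc).1 x hxI
      exact ⟨g, le_sSup hIc hg, hxg⟩
    · intro htop
      have h1 : (1 : A) ∈ sSup c := htop ▸ Submodule.mem_top
      rcases (Submodule.mem_sSup_of_directed ⟨y, hy⟩ hchain.directedOn).mp h1 with ⟨I, hIc, h1I⟩
      exact (hc hIc).2 ((Ideal.eq_top_iff_one I).mpr h1I)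
  obtain ⟨P, hBP, hPmem, hPmax⟩ := zorn_le_nonempty₀
    {Q : Ideal A | Q.IsPure ∧ Q ≠ ⊤} hchainub B ⟨hB, hBne⟩
  · obtain ⟨hPpure, hPne⟩ := hPmem
    refine ⟨P, ⟨hPpure, hPne, ?_⟩, hBP⟩
    intro I J hI hJ hIJ
    by_cases hIP : I ≤ P
    · exact Or.inl hIP
    right
    have hsup : P ⊔ I = ⊤ := by
      by_contra hne
      have := hPmax (y := P ⊔ I) ⟨isPure_sup hPpure hI, hne⟩ le_sup_left
      exact hIP (le_sup_right.trans this)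
    intro x hx
    have h1 : (1 : A) ∈ P ⊔ I := hsup ▸ Submodule.mem_top
    rcases Submodule.mem_sup.mp h1 with ⟨p, hp, i, hi, hpi⟩
    have : x = p * x + i * x := by rw [← add_mul, hpi, one_mul]
    rw [this]
    exact P.add_mem (P.mul_mem_right x hp) (hIJ (Ideal.mul_mem_mul hi hx))

lemma aux_sep (e f : A) (he : IsIdempotentElem e) (hf : IsIdempotentElem f)
    (hne : e * (1 - f) ≠ 0) : ∃ P : Ideal A, P.IsPurelyPrime ∧ f ∈ P ∧ e ∉ P := by
  have he' : e * e = e := he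
  have hf' : f * f = f := hf
  set g := e * (1 - f) with hg
  have hB : (Ideal.span {1 - g}).IsPure := by
    intro x hx
    rcases Ideal.mem_span_singleton.mp hx with ⟨a, rfl⟩
    refine ⟨1 - g, Ideal.mem_span_singleton_self _, ?_⟩
    have : g * g = g := by
      simp only [hg]
      linear_combination (1-f)^2 * he' + e * hf'
    linear_combination (-a) * this
  have hBne : Ideal.span {1 - g} ≠ ⊤ := by
    intro htop
    rw [Ideal.span_singleton_eq_top] at htop
    rcases htop.exists_right_inv with ⟨a, ha⟩
    apply hne
    have : g * g = g := by
      simp only [hg]; linear_combination (1-f)^2 * he' + e * hf'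
    calc e * (1 - f) = g * ((1 - g) * a) := by rw [ha]; ring
    _ = (g - g * g) * a := by ring
    _ = 0 := by rw [this]; ring
  obtain ⟨P, hP, hBP⟩ := exists_purelyPrime hB hBne
  have h1g : (1 : A) - g ∈ P := hBP (Ideal.mem_span_singleton_self _)
  refine ⟨P, hP, ?_, ?_⟩
  · have : f = f * (1 - g) := by simp only [hg]; linear_combination (-e) * hf'
    rw [this]
    exact P.mul_mem_left f h1g
  · intro heP
    have hgP : g ∈ P := by rw [hg, mul_comm]; exact P.mul_mem_left _ heP
    have : (1 : A) ∈ P := by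
      have := P.add_mem h1g hgP
      simpa using this
    exact hP.2.1 ((Ideal.eq_top_iff_one P).mpr this)

/-- injectivity part of the Grothendieck type theorem: idempotents
`e`, `f` lying in exactly the same purely-prime ideals are equal. -/
theorem idempotent_eq_of_forall_purelyPrime_mem_iff
    (e f : A) (he : IsIdempotentElem e) (hf : IsIdempotentElem f)
    (h : ∀ P : Ideal A, P.IsPurelyPrime → (e ∈ P ↔ f ∈ P)) :
    e = f := by
  by_cases h1 : e * (1 - f) = 0
  · by_cases h2 : f * (1 - e) = 0
    · linear_combination h1 - h2
    · obtain ⟨P, hP, heP, hfP⟩ := aux_sep f e hf he h2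
      exact absurd ((h P hP).mp heP) hfP
  · obtain ⟨P, hP, hfP, heP⟩ := aux_sep e f he hf h1
    exact absurd ((h P hP).mpr hfP) heP
end

section
/- Let A be a Gelfand ring. Then every purely-prime ideal of A is purely-maximal. -/
variable {A : Type*} [CommRing A]

lemma mem_unitPart {I : Ideal A} {f : A} : f ∈ I.unitPart ↔ ∃ g ∈ I, f = f * g := Iff.rfl

/-- The annihilator of an element, as an ideal. -/
def annI (z : A) : Ideal A where
  carrier := {a | z * a = 0}
  zero_mem' := mul_zero z
  add_mem' := by
    rintro a b (ha : _ = _) (hb : _ = _)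
    show z * (a + b) = 0
    rw [mul_add, ha, hb, add_zero]
  smul_mem' := by
    rintro c a (ha : _ = _)
    show z * (c * a) = 0
    rw [mul_comm c a, ← mul_assoc, ha, zero_mul]

lemma mem_annI {z a : A} : a ∈ annI z ↔ z * a = 0 := Iff.rfl

/-- Key Gelfand lemma: if `s ∉ m` (m maximal), there is `x ∉ m` with `x * (1 - c*s) = 0`. -/
lemma gelfand_key (hA : IsGelfandRing A) {m : Ideal A} (hm : m.IsMaximal) {s : A}
    (hs : s ∉ m) : ∃ x c : A, x ∉ m ∧ x * (1 - c * s) = 0 := by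
  by_contra h
  push_neg at h
  -- the multiplicative set of elements u * (1 - c*s) with u ∉ m
  set T : Submonoid A :=
    { carrier := {a | ∃ u c : A, u ∉ m ∧ a = u * (1 - c * s)}
      one_mem' := ⟨1, 0, by
        refine ⟨fun h1 => hm.ne_top ((Ideal.eq_top_iff_one m).2 h1), by ring⟩⟩
      mul_mem' := by
        rintro a b ⟨u, c, hu, rfl⟩ ⟨u', c', hu', rfl⟩
        refine ⟨u * u', c + c' - c * c' * s, fun huu => ?_, by ring⟩
        rcases hm.isPrime.mem_or_mem huu with h' | h' <;> [exact hu h'; exact hu' h'] } with hT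
  have h0 : Disjoint ((⊥ : Ideal A) : Set A) (T : Set A) := by
    rw [Set.disjoint_left]
    rintro a ha ⟨u, c, hu, rfl⟩
    simp only [SetLike.mem_coe, Ideal.mem_bot] at ha
    exact h u c hu ha
  obtain ⟨p, hp, -, hdisj⟩ := Ideal.exists_le_prime_disjoint ⊥ T h0
  have hpm : p ≤ m := by
    intro x hx
    by_contra hxm
    exact Set.disjoint_left.1 hdisj hx ⟨x, 0, hxm, by ring⟩
  -- p + (s) is proper
  have hps : p ⊔ Ideal.span {s} ≠ ⊤ := by
    intro htop
    rw [Ideal.eq_top_iff_one, Submodule.mem_sup] at htop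
    obtain ⟨q, hq, w, hw, hqw⟩ := htop
    obtain ⟨c, hc⟩ := Ideal.mem_span_singleton'.1 hw
    have : (1 : A) - c * s ∈ p := by
      have : (1 : A) - c * s = q := by rw [← hqw, ← hc]; ring
      rwa [this]
    exact Set.disjoint_left.1 hdisj this ⟨1, c, fun h1 =>
      hm.ne_top ((Ideal.eq_top_iff_one m).2 h1), by ring⟩
  obtain ⟨n, hn, hpn⟩ := Ideal.exists_le_maximal _ hps
  have hsn : s ∈ n := hpn (Submodule.mem_sup_right (Ideal.mem_span_singleton_self s))
  obtain ⟨m₀, -, huniq⟩ := hA p hp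
  have h1 : m = m₀ := (huniq m ⟨hm, hpm⟩).symm ▸ rfl
  have := (huniq m ⟨hm, hpm⟩).trans (huniq n ⟨hn, le_sup_left.trans hpn⟩).symm
  exact hs (this ▸ hsn)

/-- In a Gelfand ring, the unit part of any ideal is pure. -/
lemma unitPart_isPure (hA : IsGelfandRing A) (K : Ideal A) : K.unitPart.IsPure := by
  intro z hz
  obtain ⟨y, hy, hzy⟩ := hz
  by_cases hL : annI z ⊔ K.unitPart = ⊤
  · rw [Ideal.eq_top_iff_one, Submodule.mem_sup] at hL
    obtain ⟨α, hα, h, hh, hαh⟩ := hL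
    refine ⟨h, hh, ?_⟩
    have : (1 : A) - h = α := by rw [← hαh]; ring
    rw [this]
    exact mem_annI.1 hα
  · exfalso
    obtain ⟨k, hk, hLk⟩ := Ideal.exists_le_maximal _ hL
    have h1y : (1 : A) - y ∈ k := hLk (Submodule.mem_sup_left (by
      show z * (1 - y) = 0
      linear_combination hzy))
    have hyk : y ∉ k := fun hyk => hk.ne_top ((Ideal.eq_top_iff_one k).2 (by
      have := k.add_mem h1y hyk; simpa using this))
    obtain ⟨x, c, hxk, hxc⟩ := gelfand_key hA hk hyk
    exact hxk (hLk (Submodule.mem_sup_right ⟨c * y, K.mul_mem_left c hy,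
      by linear_combination hxc⟩))

/-- Uniqueness of the maximal ideal over a purely-prime ideal in a Gelfand ring. -/
lemma maximal_unique (hA : IsGelfandRing A) {P : Ideal A} (hP : P.IsPurelyPrime)
    {m n : Ideal A} (hm : m.IsMaximal) (hn : n.IsMaximal) (hPm : P ≤ m) (hPn : P ≤ n) :
    m = n := by
  by_contra hmn
  have hnm : ¬ n ≤ m := fun hle => hmn ((hn.eq_of_le hm.ne_top hle)).symm
  obtain ⟨s, hsn, hsm⟩ := SetLike.not_le_iff_exists.1 hnm
  obtain ⟨x, c, hxm, hxc⟩ := gelfand_key hA hm hsm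
  set b : A := 1 - c * s with hb
  have hbn : b ∉ n := fun hbn => hn.ne_top ((Ideal.eq_top_iff_one n).2 (by
    have := n.add_mem hbn (n.mul_mem_left c hsn); simpa [hb] using this))
  have hxb : x * b = 0 := hxc
  -- x' ∈ u(annI b) with x' ∉ m
  obtain ⟨x', c', hx'm, hx'c⟩ := gelfand_key hA hm hxm
  have hx'I : x' ∈ (annI b).unitPart :=
    ⟨c' * x, mem_annI.2 (by linear_combination c' * hxb),
      by linear_combination hx'c⟩
  -- y ∈ u(span {b}) with y ∉ n
  obtain ⟨y, d, hyn, hyd⟩ := gelfand_key hA hn hbn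
  have hyJ : y ∈ (Ideal.span {b}).unitPart :=
    ⟨d * b, Ideal.mem_span_singleton'.2 ⟨d, rfl⟩, by linear_combination hyd⟩
  have hmul : (annI b).unitPart * (Ideal.span {b}).unitPart ≤ P := by
    rw [Ideal.mul_le]
    rintro r hr t ht
    obtain ⟨e, he, hre⟩ := hr
    obtain ⟨w, hw, htw⟩ := ht
    obtain ⟨d', hd'⟩ := Ideal.mem_span_singleton'.1 hw
    have hrb : r * b = 0 := by
      have : b * e = 0 := mem_annI.1 he
      linear_combination b * hre + r * this
    have : r * t = 0 := by
      linear_combination r * htw + t * d' * hrb - r * t * hd'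
    rw [this]
    exact P.zero_mem
  rcases hP.2.2 _ _ (unitPart_isPure hA (annI b)) (unitPart_isPure hA (Ideal.span {b}))
    hmul with hIP | hJP
  · exact hx'm (hPm (hIP hx'I))
  · exact hyn (hPn (hJP hyJ))

/-- In a Gelfand ring every purely-prime ideal is purely-maximal. -/
theorem purelyPrime_isPurelyMaximal_of_gelfand (hA : IsGelfandRing A)
    (P : Ideal A) (hP : P.IsPurelyPrime) : P.IsPurelyMaximal := by
  obtain ⟨hPure, hTop, hPrime⟩ := hP
  refine ⟨hPure, hTop, fun Q hQpure hQtop hPQ => ?_⟩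
  obtain ⟨n, hn, hQn⟩ := Ideal.exists_le_maximal Q hQtop
  refine le_antisymm hPQ (fun f hf => ?_)
  obtain ⟨g, hg, hfg⟩ := hQpure f hf
  -- consider the ideal J = {y | f * y ∈ P}
  set J : Ideal A := P.colon (Ideal.span {f}) with hJ
  by_contra hfP
  have hJtop : J ≠ ⊤ := fun htop => hfP (by
    have : (1 : A) ∈ J := htop ▸ Submodule.mem_top
    have := Ideal.mem_colon_span_singleton.1 this
    rwa [one_mul] at this)
  obtain ⟨k, hk, hJk⟩ := Ideal.exists_le_maximal J hJtop
  have hPk : P ≤ k := le_trans (fun y hy => Ideal.mem_colon_span_singleton.2 (P.mul_mem_right f hy)) hJk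
  have hgk : (1 : A) - g ∈ k := hJk (Ideal.mem_colon_span_singleton.2 (by
    have : (1 - g) * f = 0 := by linear_combination hfg
    rw [this]; exact P.zero_mem))
  have hkn : k = n := maximal_unique hA ⟨hPure, hTop, hPrime⟩ hk hn hPk (le_trans hPQ hQn)
  have hgn : g ∈ k := hkn ▸ hQn hg
  exact hk.ne_top ((Ideal.eq_top_iff_one k).2 (by simpa using k.add_mem hgk hgn))
end

section
/- Let A be an mp-ring. Then the purely-maximal ideals of A are precisely the ideals of the form ν(p) where p is a minimal prime ideal of A; that is, for every minimal prime p of A, ν(p) is purely-maximal, and every purely-maximal ideal of A equals ν(p) for some minimal prime p. -/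
variable {A : Type*} [CommRing A]

section Aux

/-- The sup of a set of pure ideals is pure. -/
lemma isPure_sSup {S : Set (Ideal A)} (h : ∀ J ∈ S, J.IsPure) : (sSup S).IsPure := by
  set T : Ideal A :=
    { carrier := {x | ∃ g ∈ sSup S, x * (1 - g) = 0}
      zero_mem' := ⟨0, (sSup S).zero_mem, by ring⟩
      add_mem' := by
        rintro a b ⟨g, hg, ha⟩ ⟨k, hk, hb⟩
        exact ⟨g + k - g * k,
          (sSup S).sub_mem ((sSup S).add_mem hg hk) ((sSup S).mul_mem_right k hg),
          by linear_combination (1 - k) * ha + (1 - g) * hb⟩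
      smul_mem' := by
        rintro c a ⟨g, hg, ha⟩
        exact ⟨g, hg, by rw [smul_eq_mul]; linear_combination c * ha⟩ } with hT
  have hle : sSup S ≤ T := by
    refine sSup_le fun J hJ => fun x hx => ?_
    obtain ⟨g, hg, hxg⟩ := h J hJ x hx
    exact ⟨g, (le_sSup hJ : J ≤ sSup S) hg, hxg⟩
  intro f hf
  exact hle hf

lemma purePart_isPure (I : Ideal A) : I.purePart.IsPure :=
  isPure_sSup fun _ hJ => hJ.1

lemma purePart_le (I : Ideal A) : I.purePart ≤ I :=
  sSup_le fun _ hJ => hJ.2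

lemma le_purePart {I J : Ideal A} (hJ : J.IsPure) (h : J ≤ I) : J ≤ I.purePart :=
  le_sSup ⟨hJ, h⟩

/-- A pure ideal contained in a proper ideal `P` is contained in every prime `Q ≤ P`. -/
lemma pure_le_prime {J P Q : Ideal A} (hJ : J.IsPure) (hP : P ≠ ⊤) (hQ : Q.IsPrime)
    (hJP : J ≤ P) (hQP : Q ≤ P) : J ≤ Q := by
  intro f hf
  obtain ⟨g, hg, hfg⟩ := hJ f hf
  rcases hQ.mem_or_mem (show f * (1 - g) ∈ Q by rw [hfg]; exact Q.zero_mem) with h | h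
  · exact h
  · exfalso
    apply hP
    rw [Ideal.eq_top_iff_one]
    have h1 : (1 : A) = (1 - g) + g := by ring
    rw [h1]
    exact P.add_mem (hQP h) (hJP hg)

/-- Dichotomy: for a prime `m` and `g : A`, either some `s ∉ m` kills a power of `g`, or
there is a prime `P ≤ m` avoiding `g`. -/
lemma dich (m : Ideal A) (hm : m.IsPrime) (g : A) :
    (∃ s ∉ m, ∃ n : ℕ, s * g ^ n = 0) ∨ ∃ P : Ideal A, P.IsPrime ∧ P ≤ m ∧ g ∉ P := by
  haveI := hm
  by_cases h : algebraMap A (Localization.AtPrime m) g ∈ nilradical (Localization.AtPrime m)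
  · left
    obtain ⟨n, hn⟩ := mem_nilradical.mp h
    rw [← map_pow] at hn
    obtain ⟨s, hs⟩ := (IsLocalization.map_eq_zero_iff m.primeCompl _ _).mp hn
    exact ⟨(s : A), s.2, n, hs⟩
  · right
    rw [nilradical_eq_sInf, Submodule.mem_sInf] at h
    push_neg at h
    obtain ⟨𝔭, h𝔭, hg⟩ := h
    haveI : Ideal.IsPrime 𝔭 := h𝔭
    refine ⟨Ideal.comap (algebraMap A (Localization.AtPrime m)) 𝔭,
      Ideal.IsPrime.comap _, ?_, hg⟩
    intro a ha
    by_contra ham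
    have hu : IsUnit (algebraMap A (Localization.AtPrime m) a) :=
      IsLocalization.map_units (Localization.AtPrime m) (⟨a, ham⟩ : m.primeCompl)
    exact this.ne_top (Ideal.eq_top_of_isUnit_mem 𝔭 ha hu)

/-- In a minimal prime `q`, every element has a power killed by something outside `q`. -/
lemma min_pow {q : Ideal A} (hq : q ∈ minimalPrimes A) {x : A} (hx : x ∈ q) :
    ∃ s ∉ q, ∃ n : ℕ, s * x ^ n = 0 := by
  have hqP : q.IsPrime := hq.1.1
  rcases dich q hqP x with h | ⟨P, hP, hPq, hxP⟩
  · exact h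
  · exact absurd ((hq.2 ⟨hP, bot_le⟩ hPq) hx) hxP

/-- The ideal of elements killing some power of `g`. -/
def annPow (g : A) : Ideal A where
  carrier := {u | ∃ n : ℕ, u * g ^ n = 0}
  zero_mem' := ⟨0, by ring⟩
  add_mem' := by
    rintro a b ⟨n, ha⟩ ⟨m, hb⟩
    exact ⟨n + m, by linear_combination g ^ m * ha + g ^ n * hb⟩
  smul_mem' := by
    rintro c a ⟨n, ha⟩
    exact ⟨n, by rw [smul_eq_mul]; linear_combination c * ha⟩

lemma annPow_sup_eq_top (hA : IsMpRing A) {g t : A} (h : g * t = 0) :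
    annPow g ⊔ annPow t = ⊤ := by
  by_contra hne
  obtain ⟨m, hm, hle⟩ := Ideal.exists_le_maximal _ hne
  haveI hmP := hm.isPrime
  rcases dich m hmP g with ⟨s, hs, n, hsg⟩ | ⟨P₁, hP₁, hP₁m, hgP₁⟩
  · exact hs (hle (le_sup_left (a := annPow g) (b := annPow t) ⟨n, hsg⟩))
  rcases dich m hmP t with ⟨s, hs, n, hst⟩ | ⟨P₂, hP₂, hP₂m, htP₂⟩
  · exact hs (hle (le_sup_right (a := annPow g) (b := annPow t) ⟨n, hst⟩))
  haveI := hP₁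
  haveI := hP₂
  obtain ⟨Q₁, hQ₁, hQ₁P₁⟩ := Ideal.exists_minimalPrimes_le (bot_le : (⊥ : Ideal A) ≤ P₁)
  obtain ⟨Q₂, hQ₂, hQ₂P₂⟩ := Ideal.exists_minimalPrimes_le (bot_le : (⊥ : Ideal A) ≤ P₂)
  obtain ⟨Q, -, hQuniq⟩ := hA m hmP
  have e₁ : Q₁ = Q := hQuniq Q₁ ⟨hQ₁, hQ₁P₁.trans hP₁m⟩
  have e₂ : Q₂ = Q := hQuniq Q₂ ⟨hQ₂, hQ₂P₂.trans hP₂m⟩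
  have hQ₁prime : Q₁.IsPrime := hQ₁.1.1
  have hmem : g * t ∈ Q₁ := by rw [h]; exact Q₁.zero_mem
  rcases hQ₁prime.mem_or_mem hmem with hgQ | htQ
  · exact hgP₁ (hQ₁P₁ hgQ)
  · have e₃ : Q₁ = Q₂ := e₁.trans e₂.symm
    rw [e₃] at htQ
    exact htP₂ (hQ₂P₂ htQ)

lemma step_lemma (hA : IsMpRing A) {g t : A} (h : g * t = 0) :
    ∃ (g' : A) (a b : ℕ), g ^ (a + 1) * (1 - g') = 0 ∧ g' * t ^ b = 0 := by
  have htop := annPow_sup_eq_top hA h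
  have h1 : (1 : A) ∈ annPow g ⊔ annPow t := by rw [htop]; trivial
  obtain ⟨u, hu, v, hv, huv⟩ := Submodule.mem_sup.mp h1
  obtain ⟨a, hu⟩ := hu
  obtain ⟨b, hv⟩ := hv
  exact ⟨v, a, b, by linear_combination g * hu - g ^ (a + 1) * huv, hv⟩

/-- Separation: for distinct minimal primes `p ≠ q` of an mp-ring, there is a pure ideal
contained in `p` but not in `q`. -/
lemma sep (hA : IsMpRing A) {p q : Ideal A} (hp : p ∈ minimalPrimes A)
    (hq : q ∈ minimalPrimes A) (hne : p ≠ q) :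
    ∃ J : Ideal A, J.IsPure ∧ J ≤ p ∧ ¬ J ≤ q := by
  have hpP : p.IsPrime := hp.1.1
  have hqP : q.IsPrime := hq.1.1
  have hqp : ¬ q ≤ p := by
    intro hle
    exact hne (le_antisymm (hp.2 ⟨hqP, bot_le⟩ hle) hle)
  rw [SetLike.le_def] at hqp
  push_neg at hqp
  obtain ⟨x, hxq, hxp⟩ := hqp
  obtain ⟨s, hsq, n, hsx⟩ := min_pow hq hxq
  have hxnp : x ^ n ∉ p := fun hh => hxp (hpP.mem_of_pow_mem n hh)
  have hsp : s ∈ p := by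
    rcases hpP.mem_or_mem (show s * x ^ n ∈ p by rw [hsx]; exact p.zero_mem) with h | h
    · exact h
    · exact absurd h hxnp
  -- the type of pairs with invariant
  let S := {y : A × A // y.1 * y.2 = 0 ∧ y.1 ∈ p ∧ y.2 ∉ p}
  have hstep : ∀ y : S, ∃ (z : S) (a : ℕ), y.1.1 ^ (a + 1) * (1 - z.1.1) = 0 := by
    rintro ⟨⟨g, t⟩, hgt, hgp, htp⟩
    obtain ⟨g', a, b, h1, h2⟩ := step_lemma hA hgt
    have htbp : t ^ b ∉ p := fun hh => htp (hpP.mem_of_pow_mem b hh)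
    have hg'p : g' ∈ p := by
      rcases hpP.mem_or_mem (show g' * t ^ b ∈ p by rw [h2]; exact p.zero_mem) with h | h
      · exact h
      · exact absurd h htbp
    exact ⟨⟨(g', t ^ b), h2, hg'p, htbp⟩, a, h1⟩
  choose Φ aa hΦ using hstep
  set x₀ : S := ⟨(s, x ^ n), hsx, hsp, hxnp⟩ with hx₀
  set F : ℕ → S := fun k => Φ^[k] x₀ with hF
  set G : ℕ → A := fun k => (F k).1.1 with hG
  set E : ℕ → ℕ := fun k => aa (F k) + 1 with hE
  have hGp : ∀ k, G k ∈ p := fun k => (F k).2.2.1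
  have hsucc : ∀ k, F (k + 1) = Φ (F k) := fun k => Function.iterate_succ_apply' Φ k x₀
  have hrel : ∀ k, G k ^ E k * (1 - G (k + 1)) = 0 := by
    intro k
    have := hΦ (F k)
    rw [hG, hE]
    simpa [hsucc k] using this
  have hiter : ∀ k m, G k ^ E k * G (k + 1) ^ m = G k ^ E k := by
    intro k m
    induction m with
    | zero => simp
    | succ m ih => linear_combination G (k + 1) * ih - hrel k
  set Jf : ℕ → Ideal A := fun k => Ideal.span {G k ^ E k} with hJf
  have hmono : Monotone Jf := by
    apply monotone_nat_of_le_succ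
    intro k
    rw [hJf]
    simp only [Ideal.span_le, Set.singleton_subset_iff, SetLike.mem_coe]
    rw [Ideal.mem_span_singleton']
    exact ⟨G k ^ E k, by linear_combination hiter k (E (k + 1))⟩
  refine ⟨⨆ k, Jf k, ?_, ?_, ?_⟩
  · intro f hf
    rw [Submodule.mem_iSup_of_directed _ hmono.directed_le] at hf
    obtain ⟨k, hk⟩ := hf
    obtain ⟨c, hc⟩ := Ideal.mem_span_singleton'.mp hk
    refine ⟨G (k + 1) ^ E (k + 1), ?_, ?_⟩
    · exact le_iSup Jf (k + 1) (Ideal.subset_span rfl)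
    · linear_combination (G (k + 1) ^ E (k + 1) - 1) * hc - c * hiter k (E (k + 1))
  · refine iSup_le fun k => ?_
    rw [hJf]
    simp only [Ideal.span_le, Set.singleton_subset_iff, SetLike.mem_coe]
    exact p.pow_mem_of_mem (hGp k) (E k) (Nat.succ_pos _)
  · intro hle
    have hmem : G 0 ^ E 0 ∈ (⨆ k, Jf k : Ideal A) := le_iSup Jf 0 (Ideal.subset_span rfl)
    have : G 0 ∈ q := hqP.mem_of_pow_mem (E 0) (hle hmem)
    have hG0 : G 0 = s := by rw [hG, hF]; rfl
    rw [hG0] at this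
    exact hsq this

end Aux

/-- The purely-maximal ideals of an mp-ring are precisely the ideals
`ν(p)` with `p` a minimal prime. -/
theorem purelyMaximal_iff_purePart_minimalPrime_of_mp (hA : IsMpRing A) :
    (∀ p ∈ minimalPrimes A, (Ideal.purePart p).IsPurelyMaximal) ∧
    (∀ M : Ideal A, M.IsPurelyMaximal → ∃ p ∈ minimalPrimes A, M = p.purePart) := by
  constructor
  · intro p hp
    have hpP : p.IsPrime := hp.1.1
    refine ⟨purePart_isPure p, ?_, ?_⟩
    · intro h
      exact hpP.ne_top (eq_top_iff.mpr (h ▸ purePart_le p))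
    · intro Q hQ hQtop hle
      obtain ⟨m, hm, hQm⟩ := Ideal.exists_le_maximal Q hQtop
      haveI := hm.isPrime
      obtain ⟨q, hq, hqm⟩ := Ideal.exists_minimalPrimes_le (bot_le : (⊥ : Ideal A) ≤ m)
      have hQq : Q ≤ q := pure_le_prime hQ hm.ne_top hq.1.1 hQm hqm
      have hpq : p = q := by
        by_contra hne
        obtain ⟨J, hJp, hJle, hJnq⟩ := sep hA hp hq hne
        exact hJnq ((le_purePart hJp hJle).trans (hle.trans hQq))
      refine le_antisymm hle ?_
      rw [hpq]
      exact le_purePart hQ hQq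
  · rintro M ⟨hMp, hMtop, hMmax⟩
    obtain ⟨m, hm, hMm⟩ := Ideal.exists_le_maximal M hMtop
    haveI := hm.isPrime
    obtain ⟨q, hq, hqm⟩ := Ideal.exists_minimalPrimes_le (bot_le : (⊥ : Ideal A) ≤ m)
    refine ⟨q, hq, ?_⟩
    have hMq : M ≤ q := pure_le_prime hMp hm.ne_top hq.1.1 hMm hqm
    have h2 : q.purePart ≠ ⊤ := by
      intro h
      exact hq.1.1.ne_top (eq_top_iff.mpr (h ▸ purePart_le q))
    exact hMmax _ (purePart_isPure q) h2 (le_purePart hMp hMq)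
end

section
/- Let A be a reduced mp-ring. Then the purely-maximal ideals of A are precisely the minimal prime ideals of A; that is, an ideal of A is purely-maximal if and only if it is a minimal prime ideal. -/
variable {A : Type*} [CommRing A]

/-- annihilator of an element as an ideal -/
def annIdeal (f : A) : Ideal A where
  carrier := {x | f * x = 0}
  zero_mem' := mul_zero f
  add_mem' := by
    intro a b ha hb
    simp only [Set.mem_setOf_eq] at *
    rw [mul_add, ha, hb, add_zero]
  smul_mem' := by
    intro c x hx
    simp only [Set.mem_setOf_eq, smul_eq_mul] at *
    rw [mul_comm c x, ← mul_assoc, hx, zero_mul]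

theorem key_lemma [IsReduced A] (hA : IsMpRing A) {q m : Ideal A}
    (hq : q ∈ minimalPrimes A) (hm : m.IsMaximal) (hqm : q ≤ m)
    {a : A} (ha : a ∈ q) : ∃ s ∉ m, s * a = 0 := by
  haveI := hm.isPrime
  have hnil : algebraMap A (Localization.AtPrime m) a ∈ nilradical (Localization.AtPrime m) := by
    rw [nilradical_eq_sInf, Ideal.mem_sInf]
    intro P hP
    haveI hPp : P.IsPrime := hP
    set p := P.comap (algebraMap A (Localization.AtPrime m)) with hp
    haveI : p.IsPrime := Ideal.IsPrime.comap _
    have hpm : p ≤ m := by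
      intro s hs
      by_contra hsm
      have hu : IsUnit (algebraMap A (Localization.AtPrime m) s) :=
        IsLocalization.map_units (Localization.AtPrime m) (⟨s, hsm⟩ : m.primeCompl)
      exact hPp.ne_top (P.eq_top_of_isUnit_mem hs hu)
    obtain ⟨q', hq', hq'p⟩ := Ideal.exists_minimalPrimes_le (bot_le : (⊥ : Ideal A) ≤ p)
    obtain ⟨q₀, hq₀, huniq⟩ := hA m hm.isPrime
    have h1 : q' = q₀ := huniq q' ⟨hq', hq'p.trans hpm⟩
    have h2 : q = q₀ := huniq q ⟨hq, hqm⟩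
    have : a ∈ p := hq'p (by rw [h1, ← h2]; exact ha)
    exact this
  rw [mem_nilradical] at hnil
  have h0 : algebraMap A (Localization.AtPrime m) a = 0 := hnil.eq_zero
  obtain ⟨⟨s, hs⟩, hsa⟩ := (IsLocalization.map_eq_zero_iff m.primeCompl _ a).mp h0
  exact ⟨s, hs, hsa⟩

theorem minimalPrime_isPure [IsReduced A] (hA : IsMpRing A) {q : Ideal A}
    (hq : q ∈ minimalPrimes A) : q.IsPure := by
  intro f hf
  have htop : annIdeal f ⊔ q = ⊤ := by
    by_contra hne
    obtain ⟨m, hm, hle⟩ := Ideal.exists_le_maximal _ hne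
    obtain ⟨s, hsm, hsa⟩ := key_lemma hA hq hm (le_trans le_sup_right hle) hf
    exact hsm (hle (le_sup_left (a := annIdeal f) (b := q)
      (show s ∈ annIdeal f from by rwa [mul_comm] at hsa)))
  obtain ⟨x, hx, g, hg, hxg⟩ := Submodule.mem_sup.mp (htop ▸ Submodule.mem_top : (1:A) ∈ annIdeal f ⊔ q)
  exact ⟨g, hg, by have : f * x = 0 := hx; rw [show (1:A) - g = x by rw [← hxg]; ring]; exact this⟩

theorem pure_le_minimal {J q m : Ideal A} (hJ : J.IsPure) (hq : q ∈ minimalPrimes A)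
    (hJm : J ≤ m) (hqm : q ≤ m) (hm : m ≠ ⊤) : J ≤ q := by
  intro f hf
  obtain ⟨g, hg, hfg⟩ := hJ f hf
  haveI hqp : q.IsPrime := hq.1.1
  rcases hqp.mem_or_mem (show f * (1 - g) ∈ q by rw [hfg]; exact q.zero_mem) with h | h
  · exact h
  · exfalso
    apply hm
    rw [Ideal.eq_top_iff_one]
    have : (1 : A) = (1 - g) + g := by ring
    rw [this]
    exact m.add_mem (hqm h) (hJm hg)

/-- In a reduced mp-ring, the purely-maximal ideals are precisely the
minimal primes. -/
theorem purelyMaximal_iff_minimalPrime_of_reduced_mp [IsReduced A] (hA : IsMpRing A) :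
    ∀ I : Ideal A, I.IsPurelyMaximal ↔ I ∈ minimalPrimes A := by
  intro I
  constructor
  · rintro ⟨hpure, hne, hmax⟩
    obtain ⟨m, hm, hIm⟩ := Ideal.exists_le_maximal I hne
    haveI := hm.isPrime
    obtain ⟨q, hq, hqm⟩ := Ideal.exists_minimalPrimes_le (bot_le : (⊥ : Ideal A) ≤ m)
    have hIq : I ≤ q := pure_le_minimal hpure hq hIm hqm hm.ne_top
    have : I = q := hmax q (minimalPrime_isPure hA hq) hq.1.1.ne_top hIq
    rw [this]; exact hq
  · intro hq
    refine ⟨minimalPrime_isPure hA hq, hq.1.1.ne_top, fun Q hQ hQne hIQ => ?_⟩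
    obtain ⟨m, hm, hQm⟩ := Ideal.exists_le_maximal Q hQne
    exact le_antisymm hIQ (pure_le_minimal hQ hq hQm (hIQ.trans hQm) hm.ne_top)
end
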